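/- (Claim 4: QSO2 implies QSO1.) Suppose the condition QSO2 holds for μ̂. Then the condition QSO1 also holds: for all pseudo-events A, B with pdom(A) ⊆ 𝒜 and pdom(B) ⊆ ℬ for regions 𝒜 ♮ ℬ, μ̂(A ∩ B ∩ C)·μ̂(C) = μ̂(A ∩ C)·μ̂(B ∩ C) for every C ∈ Φ_p(𝒫₁), where 𝒫₁ = J⁻(𝒜) ∩ J⁻(ℬ) is the mutual past. -/
import Mathlib


open Set MeasureTheory

/-- A full specification of a region `R ⊆ 𝕊`: a nonempty event `F` with `dom F ⊆ R`
that decides every event decidable within `R`. -/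
def IsFullSpec {Ω S : Type*} [MeasurableSpace Ω] (dom : Set Ω → Set S)
    (R : Set S) (F : Set Ω) : Prop :=
  MeasurableSet F ∧ F.Nonempty ∧ dom F ⊆ R ∧
    ∀ X : Set Ω, MeasurableSet X → dom X ⊆ R → F ⊆ X ∨ F ⊆ Xᶜ

/-- A pseudo-event full specification of a region `R ⊆ 𝕊`: a subset of `Ω × Ω` that is
the product `G × H` of two event full specifications `G`, `H` of `R`. -/
def IsPseudoFullSpec {Ω S : Type*} [MeasurableSpace Ω] (dom : Set Ω → Set S)
    (R : Set S) (F : Set (Ω × Ω)) : Prop :=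
  ∃ G H : Set Ω, IsFullSpec dom R G ∧ IsFullSpec dom R H ∧ F = G ×ˢ H

/-- The causal past `J⁻(𝒳)` of a region in the causal structure `𝕊`. -/
def causalPast {S : Type*} [PartialOrder S] (𝒳 : Set S) : Set S :=
  {s | ∃ x ∈ 𝒳, s ≤ x}

/-- Two regions are spacelike, `𝒳 ♮ 𝒴`, if `J⁻(𝒳) ∩ 𝒴 = ∅` and `J⁻(𝒴) ∩ 𝒳 = ∅`. -/
def Spacelike {S : Type*} [PartialOrder S] (𝒳 𝒴 : Set S) : Prop :=
  causalPast 𝒳 ∩ 𝒴 = ∅ ∧ causalPast 𝒴 ∩ 𝒳 = ∅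

/-- Quantum screening off, QSO1: for all pseudo-events `A = A₁ × A₂`, `B = B₁ × B₂`
with `pdom A ⊆ 𝒜`, `pdom B ⊆ ℬ` for spacelike regions `𝒜 ♮ ℬ`,
`μ̂(A ∩ B ∩ C)·μ̂(C) = μ̂(A ∩ C)·μ̂(B ∩ C)` for every pseudo-event full specification
`C` of the mutual past `𝒫₁ = J⁻(𝒜) ∩ J⁻(ℬ)`. -/
def QSO1 {Ω S : Type*} [MeasurableSpace Ω] [PartialOrder S]
    (dom : Set Ω → Set S) (μh : Set (Ω × Ω) → ℂ) : Prop :=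
  ∀ A₁ A₂ B₁ B₂ : Set Ω, MeasurableSet A₁ → MeasurableSet A₂ →
    MeasurableSet B₁ → MeasurableSet B₂ →
    ∀ 𝒜 ℬ : Set S, dom A₁ ∪ dom A₂ ⊆ 𝒜 → dom B₁ ∪ dom B₂ ⊆ ℬ → Spacelike 𝒜 ℬ →
      ∀ C : Set (Ω × Ω), IsPseudoFullSpec dom (causalPast 𝒜 ∩ causalPast ℬ) C →
        μh ((A₁ ×ˢ A₂) ∩ (B₁ ×ˢ B₂) ∩ C) * μh C =
          μh ((A₁ ×ˢ A₂) ∩ C) * μh ((B₁ ×ˢ B₂) ∩ C)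

/-- Quantum screening off, QSO2: as QSO1, but with pseudo-event full specifications of
the joint past `𝒫₂ = (J⁻(𝒜) ∪ J⁻(ℬ)) \ (𝒜 ∪ ℬ)`. -/
def QSO2 {Ω S : Type*} [MeasurableSpace Ω] [PartialOrder S]
    (dom : Set Ω → Set S) (μh : Set (Ω × Ω) → ℂ) : Prop :=
  ∀ A₁ A₂ B₁ B₂ : Set Ω, MeasurableSet A₁ → MeasurableSet A₂ →
    MeasurableSet B₁ → MeasurableSet B₂ →
    ∀ 𝒜 ℬ : Set S, dom A₁ ∪ dom A₂ ⊆ 𝒜 → dom B₁ ∪ dom B₂ ⊆ ℬ → Spacelike 𝒜 ℬ →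
      ∀ C : Set (Ω × Ω),
        IsPseudoFullSpec dom ((causalPast 𝒜 ∪ causalPast ℬ) \ (𝒜 ∪ ℬ)) C →
          μh ((A₁ ×ˢ A₂) ∩ (B₁ ×ˢ B₂) ∩ C) * μh C =
            μh ((A₁ ×ˢ A₂) ∩ C) * μh ((B₁ ×ˢ B₂) ∩ C)

/-- Claim 4: QSO2 implies QSO1.  No properties of the least-domain-of-decidability
function `dom` are needed for this implication. -/
theorem stmt16 {Ω S : Type*} [MeasurableSpace Ω] [PartialOrder S]
    (dom : Set Ω → Set S) (μh : Set (Ω × Ω) → ℂ)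
    (h2 : QSO2 dom μh) : QSO1 dom μh := by
  intro A₁ A₂ B₁ B₂ hA₁ hA₂ hB₁ hB₂ 𝒜 ℬ hA hB hs C hC
  set P := causalPast 𝒜 ∩ causalPast ℬ with hP
  set 𝒜' := causalPast 𝒜 \ P with h𝒜'
  set ℬ' := causalPast ℬ \ P with hℬ'
  have hsub𝒜 : 𝒜 ⊆ 𝒜' := by
    intro a ha
    refine ⟨⟨a, ha, le_refl a⟩, fun hp => ?_⟩
    have : a ∈ causalPast ℬ ∩ 𝒜 := ⟨hp.2, ha⟩
    rw [hs.2] at this; exact this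
  have hsubℬ : ℬ ⊆ ℬ' := by
    intro b hb
    refine ⟨⟨b, hb, le_refl b⟩, fun hp => ?_⟩
    have : b ∈ causalPast 𝒜 ∩ ℬ := ⟨hp.1, hb⟩
    rw [hs.1] at this; exact this
  have hJ𝒜 : causalPast 𝒜' = causalPast 𝒜 := by
    apply Set.Subset.antisymm
    · rintro s ⟨x, hx, hsx⟩
      obtain ⟨a, ha, hxa⟩ := hx.1
      exact ⟨a, ha, le_trans hsx hxa⟩
    · rintro s ⟨a, ha, hsa⟩
      exact ⟨a, hsub𝒜 ha, hsa⟩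
  have hJℬ : causalPast ℬ' = causalPast ℬ := by
    apply Set.Subset.antisymm
    · rintro s ⟨x, hx, hsx⟩
      obtain ⟨b, hb, hxb⟩ := hx.1
      exact ⟨b, hb, le_trans hsx hxb⟩
    · rintro s ⟨b, hb, hsb⟩
      exact ⟨b, hsubℬ hb, hsb⟩
  have hsl : Spacelike 𝒜' ℬ' := by
    constructor
    · rw [hJ𝒜]
      ext s
      simp only [Set.mem_inter_iff, Set.mem_empty_iff_false, iff_false, not_and]
      intro h1 h2
      exact h2.2 ⟨h1, h2.1⟩
    · rw [hJℬ]
      ext s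
      simp only [Set.mem_inter_iff, Set.mem_empty_iff_false, iff_false, not_and]
      intro h1 h2
      exact h2.2 ⟨h2.1, h1⟩
  have hreg : (causalPast 𝒜' ∪ causalPast ℬ') \ (𝒜' ∪ ℬ') = P := by
    rw [hJ𝒜, hJℬ]
    ext s
    simp only [Set.mem_diff, Set.mem_union, h𝒜', hℬ', Set.mem_diff, hP,
      Set.mem_inter_iff]
    constructor
    · rintro ⟨h1, h2⟩
      push_neg at h2
      rcases h1 with h | h
      · exact h2.1 h
      · exact h2.2 h
    · intro h
      exact ⟨Or.inl h.1, by push_neg; exact ⟨fun _ => h, fun _ => h⟩⟩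
  have := h2 A₁ A₂ B₁ B₂ hA₁ hA₂ hB₁ hB₂ 𝒜' ℬ'
    (hA.trans hsub𝒜) (hB.trans hsubℬ) hsl C (by rw [hreg]; exact hC)
  exact this
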